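/- Let q : ℝ → ℝ be a measurable function with q ≥ 0 and ∫_ℝ q(s) ds = 1, such that s ↦ s·q(s) is integrable, with mean s₀ := ∫_ℝ s·q(s) ds, and assume the second moment is finite: ∫_ℝ (s − s₀)²·q(s) ds < ∞. Then for every v ∈ ℝ, the function (K, s) ↦ e^{ivK}·(s − K)·(1_{{s > K}} − 1_{{s₀ > K}})·q(s) is integrable on ℝ², and the iterated integrals coincide: ∫_ℝ e^{ivK} · ( ∫_ℝ (s − K)·(1_{{s > K}} − 1_{{s₀ > K}})·q(s) ds ) dK = ∫_ℝ q(s) · ( ∫_{s₀}^{s} e^{ivK}·(s − K) dK ) ds. -/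

import Mathlib

open MeasureTheory

lemma diff_smul_ind {E : Type*} [AddCommGroup E] [Module ℝ E]
    {s₀ s : ℝ} (hle : s₀ ≤ s) (g : ℝ → E) (K : ℝ) :
    ((if K < s then (1:ℝ) else 0) - (if K < s₀ then 1 else 0)) • g K
      = Set.indicator (Set.Ico s₀ s) g K := by
  by_cases h1 : K < s <;> by_cases h2 : K < s₀
  · simp [h1, h2, Set.indicator_of_notMem (fun hm : K ∈ Set.Ico s₀ s => absurd hm.1 (not_le.mpr h2))]
  · simp [h1, h2, Set.indicator_of_mem (Set.mem_Ico.mpr ⟨not_lt.mp h2, h1⟩)]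
  · exact absurd (lt_of_lt_of_le h2 hle) h1
  · simp [h1, h2, Set.indicator_of_notMem (fun hm : K ∈ Set.Ico s₀ s => h1 hm.2)]

lemma diff_smul_ind' {E : Type*} [AddCommGroup E] [Module ℝ E]
    {s₀ s : ℝ} (hlt : s < s₀) (g : ℝ → E) (K : ℝ) :
    ((if K < s then (1:ℝ) else 0) - (if K < s₀ then 1 else 0)) • g K
      = - Set.indicator (Set.Ico s s₀) g K := by
  by_cases h1 : K < s <;> by_cases h2 : K < s₀
  · simp [h1, h2, Set.indicator_of_notMem (fun hm : K ∈ Set.Ico s s₀ => absurd hm.1 (not_le.mpr h1))]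
  · exact absurd (h1.trans hlt) h2
  · simp [h1, h2, Set.indicator_of_mem (Set.mem_Ico.mpr ⟨not_lt.mp h1, h2⟩)]
  · simp [h1, h2, Set.indicator_of_notMem (fun hm : K ∈ Set.Ico s s₀ => h2 hm.2)]


lemma diff_mul_indR {s₀ s : ℝ} (hle : s₀ ≤ s) (g : ℝ → ℝ) (K : ℝ) :
    ((if K < s then (1:ℝ) else 0) - (if K < s₀ then 1 else 0)) * g K
      = Set.indicator (Set.Ico s₀ s) g K := by
  rw [← smul_eq_mul]; exact diff_smul_ind hle g K

lemma diff_mul_indR' {s₀ s : ℝ} (hlt : s < s₀) (g : ℝ → ℝ) (K : ℝ) :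
    ((if K < s then (1:ℝ) else 0) - (if K < s₀ then 1 else 0)) * g K
      = - Set.indicator (Set.Ico s s₀) g K := by
  rw [← smul_eq_mul]; exact diff_smul_ind' hlt g K

lemma diff_mul_indC {s₀ s : ℝ} (hle : s₀ ≤ s) (g : ℝ → ℂ) (K : ℝ) :
    ((((if K < s then (1:ℝ) else 0) - (if K < s₀ then 1 else 0) : ℝ)) : ℂ) * g K
      = Set.indicator (Set.Ico s₀ s) g K := by
  rw [← Complex.real_smul]; exact diff_smul_ind hle g K

lemma diff_mul_indC' {s₀ s : ℝ} (hlt : s < s₀) (g : ℝ → ℂ) (K : ℝ) :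
    ((((if K < s then (1:ℝ) else 0) - (if K < s₀ then 1 else 0) : ℝ)) : ℂ) * g K
      = - Set.indicator (Set.Ico s s₀) g K := by
  rw [← Complex.real_smul]; exact diff_smul_ind' hlt g K

lemma key_int (s₀ s : ℝ) (g : ℝ → ℂ) :
    ∫ K, ((((if K < s then (1:ℝ) else 0) - (if K < s₀ then 1 else 0) : ℝ)) : ℂ) * g K
      = ∫ K in s₀..s, g K := by
  rcases le_or_gt s₀ s with hle | hlt
  · simp_rw [diff_mul_indC hle g]
    rw [integral_indicator measurableSet_Ico, setIntegral_congr_set Ico_ae_eq_Ioc,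
      ← intervalIntegral.integral_of_le hle]
  · simp_rw [diff_mul_indC' hlt g]
    rw [integral_neg, integral_indicator measurableSet_Ico, setIntegral_congr_set Ico_ae_eq_Ioc,
      ← intervalIntegral.integral_of_le hlt.le, ← intervalIntegral.integral_symm]

lemma ico_int1 (a b : ℝ) (h : a ≤ b) : ∫ K in Set.Ico a b, (b - K) = (b - a)^2/2 := by
  rw [setIntegral_congr_set Ico_ae_eq_Ioc, ← intervalIntegral.integral_of_le h,
    intervalIntegral.integral_sub intervalIntegrable_const intervalIntegral.intervalIntegrable_id,
    intervalIntegral.integral_const, integral_id]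
  simp [smul_eq_mul]; ring

lemma ico_int2 (a b : ℝ) (h : a ≤ b) : ∫ K in Set.Ico a b, (K - a) = (b - a)^2/2 := by
  rw [setIntegral_congr_set Ico_ae_eq_Ioc, ← intervalIntegral.integral_of_le h,
    intervalIntegral.integral_sub intervalIntegral.intervalIntegrable_id intervalIntegrable_const,
    intervalIntegral.integral_const, integral_id]
  simp [smul_eq_mul]; ring

theorem carr_madan_fubini_interchange
    (q : ℝ → ℝ) (hq_meas : Measurable q) (hq_nonneg : ∀ s, 0 ≤ q s)
    (hq_prob : ∫ s, q s = 1)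
    (hq_mean : Integrable (fun s => s * q s))
    (s₀ : ℝ) (hs₀ : s₀ = ∫ s, s * q s)
    (hvar : Integrable (fun s => (s - s₀) ^ 2 * q s)) (v : ℝ) :
    Integrable (fun p : ℝ × ℝ =>
      Complex.exp (Complex.I * (v : ℂ) * (p.1 : ℂ)) *
        (((p.2 - p.1) * ((if p.1 < p.2 then (1 : ℝ) else 0) -
          (if p.1 < s₀ then (1 : ℝ) else 0)) * q p.2 : ℝ) : ℂ)) ∧
    ∫ K : ℝ, Complex.exp (Complex.I * (v : ℂ) * (K : ℂ)) *
        ((∫ s : ℝ, (s - K) * ((if K < s then (1 : ℝ) else 0) -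
          (if K < s₀ then (1 : ℝ) else 0)) * q s : ℝ) : ℂ) =
      ∫ s : ℝ, ((q s : ℝ) : ℂ) *
        ∫ K in s₀..s, Complex.exp (Complex.I * (v : ℂ) * (K : ℂ)) * ((s : ℂ) - (K : ℂ)) := by
  have hHeq : ∀ s K : ℝ, (s - K) * ((if K < s then (1:ℝ) else 0) - (if K < s₀ then 1 else 0)) * q s = ((if K < s then (1:ℝ) else 0) - (if K < s₀ then 1 else 0)) * ((s - K) * q s) := by
    intro s K; ring
  -- measurability of the real kernel
  have hmeasD : Measurable fun p : ℝ × ℝ => ((if p.1 < p.2 then (1:ℝ) else 0) - (if p.1 < s₀ then 1 else 0)) := by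
    apply Measurable.sub
    · exact Measurable.ite (measurableSet_lt measurable_fst measurable_snd)
        measurable_const measurable_const
    · exact Measurable.ite (measurableSet_lt measurable_fst measurable_const)
        measurable_const measurable_const
  have hmeasH : Measurable fun p : ℝ × ℝ => (p.2 - p.1) * ((if p.1 < p.2 then (1:ℝ) else 0) - (if p.1 < s₀ then 1 else 0)) * q p.2 :=
    ((measurable_snd.sub measurable_fst).mul hmeasD).mul (hq_meas.comp measurable_snd)
  -- integrability of the slices (fixed s)
  have hslice : ∀ s : ℝ, Integrable (fun K => ((if K < s then (1:ℝ) else 0) - (if K < s₀ then 1 else 0)) * ((s - K) * q s)) := by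
    intro s
    rcases le_or_gt s₀ s with hle | hlt
    · have e : (fun K => ((if K < s then (1:ℝ) else 0) - (if K < s₀ then 1 else 0)) * ((s - K) * q s))
          = Set.indicator (Set.Ico s₀ s) (fun K => (s - K) * q s) :=
        funext fun K => diff_mul_indR hle (fun K => (s - K) * q s) K
      rw [e]
      exact (((continuous_const.sub continuous_id).mul
        continuous_const).integrableOn_Icc.mono_set
        Set.Ico_subset_Icc_self).integrable_indicator measurableSet_Ico
    · have e : (fun K => ((if K < s then (1:ℝ) else 0) - (if K < s₀ then 1 else 0)) * ((s - K) * q s))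
          = fun K => - Set.indicator (Set.Ico s s₀) (fun K => (s - K) * q s) K :=
        funext fun K => diff_mul_indR' hlt (fun K => (s - K) * q s) K
      rw [e]
      exact ((((continuous_const.sub continuous_id).mul
        continuous_const).integrableOn_Icc.mono_set
        Set.Ico_subset_Icc_self).integrable_indicator measurableSet_Ico).neg
  -- value of the norm integral of a slice
  have hnorm : ∀ s : ℝ, (∫ K, ‖((if K < s then (1:ℝ) else 0) - (if K < s₀ then 1 else 0)) * ((s - K) * q s)‖) = (s - s₀)^2/2 * q s := by
    intro s
    rcases le_or_gt s₀ s with hle | hlt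
    · have h1 : ∀ K, ‖((if K < s then (1:ℝ) else 0) - (if K < s₀ then 1 else 0)) * ((s - K) * q s)‖
          = Set.indicator (Set.Ico s₀ s) (fun K => (s - K) * q s) K := by
        intro K
        have e1 : ((if K < s then (1:ℝ) else 0) - (if K < s₀ then 1 else 0)) * ((s - K) * q s)
            = Set.indicator (Set.Ico s₀ s) (fun K => (s - K) * q s) K :=
          diff_mul_indR hle (fun K => (s - K) * q s) K
        rw [e1, Real.norm_eq_abs]
        by_cases hK : K ∈ Set.Ico s₀ s
        · rw [Set.indicator_of_mem hK]
          exact abs_of_nonneg (mul_nonneg (by linarith [hK.2]) (hq_nonneg s))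
        · simp [Set.indicator_of_notMem hK]
      simp_rw [h1]
      rw [integral_indicator measurableSet_Ico, integral_mul_const, ico_int1 s₀ s hle]
    · have h1 : ∀ K, ‖((if K < s then (1:ℝ) else 0) - (if K < s₀ then 1 else 0)) * ((s - K) * q s)‖
          = Set.indicator (Set.Ico s s₀) (fun K => (K - s) * q s) K := by
        intro K
        have e1 : ((if K < s then (1:ℝ) else 0) - (if K < s₀ then 1 else 0)) * ((s - K) * q s)
            = - Set.indicator (Set.Ico s s₀) (fun K => (s - K) * q s) K :=
          diff_mul_indR' hlt (fun K => (s - K) * q s) K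
        rw [e1, norm_neg, Real.norm_eq_abs]
        by_cases hK : K ∈ Set.Ico s s₀
        · rw [Set.indicator_of_mem hK, Set.indicator_of_mem hK,
            abs_of_nonpos (mul_nonpos_of_nonpos_of_nonneg (by linarith [hK.1]) (hq_nonneg s))]
          ring
        · simp [Set.indicator_of_notMem hK]
      simp_rw [h1]
      rw [integral_indicator measurableSet_Ico, integral_mul_const, ico_int2 s s₀ hlt.le]
      have : (s₀ - s)^2 = (s - s₀)^2 := by ring
      rw [this]
  -- integrability of the real kernel on the product
  have hH : Integrable (fun p : ℝ × ℝ => (p.2 - p.1) * ((if p.1 < p.2 then (1:ℝ) else 0) - (if p.1 < s₀ then 1 else 0)) * q p.2)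
      ((volume : Measure ℝ).prod volume) := by
    rw [integrable_prod_iff' hmeasH.aestronglyMeasurable]
    constructor
    · refine Filter.Eventually.of_forall fun s => ?_
      exact (hslice s).congr (Filter.Eventually.of_forall fun K => (hHeq s K).symm)
    · have hint : Integrable (fun s => (s - s₀)^2/2 * q s) := by
        refine (hvar.div_const 2).congr (Filter.Eventually.of_forall fun s => ?_)
        ring
      refine hint.congr (Filter.Eventually.of_forall fun s => ?_)
      show (s - s₀)^2/2 * q s = ∫ K, ‖(s - K) * ((if K < s then (1:ℝ) else 0) - (if K < s₀ then 1 else 0)) * q s‖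
      rw [← hnorm s]
      congr 1
      funext K
      rw [hHeq s K]
  -- integrability of the complex kernel
  have hexp_bdd : ∀ p : ℝ × ℝ, ‖Complex.exp (Complex.I * (v : ℂ) * (p.1 : ℂ))‖ ≤ 1 := by
    intro p
    rw [Complex.norm_exp]
    have : (Complex.I * (v : ℂ) * (p.1 : ℂ)).re = 0 := by simp
    rw [this, Real.exp_zero]
  have hexp_meas : AEStronglyMeasurable
      (fun p : ℝ × ℝ => Complex.exp (Complex.I * (v : ℂ) * (p.1 : ℂ)))
      ((volume : Measure ℝ).prod volume) :=
    (Complex.continuous_exp.comp (by continuity)).aestronglyMeasurable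
  have hG : Integrable (fun p : ℝ × ℝ =>
      Complex.exp (Complex.I * (v : ℂ) * (p.1 : ℂ)) *
        (((p.2 - p.1) * ((if p.1 < p.2 then (1:ℝ) else 0) - (if p.1 < s₀ then 1 else 0)) * q p.2 : ℝ) : ℂ))
      ((volume : Measure ℝ).prod volume) :=
    hH.ofReal.bdd_mul hexp_meas (c := 1) (Filter.Eventually.of_forall hexp_bdd)
  refine ⟨by rw [Measure.volume_eq_prod]; exact hG, ?_⟩
  -- the Fubini swap
  have hswap := MeasureTheory.integral_integral_swap
    (f := fun K s : ℝ => Complex.exp (Complex.I * (v : ℂ) * (K : ℂ)) *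
      (((s - K) * ((if K < s then (1:ℝ) else 0) - (if K < s₀ then 1 else 0)) * q s : ℝ) : ℂ)) hG
  calc
    ∫ K : ℝ, Complex.exp (Complex.I * (v : ℂ) * (K : ℂ)) *
        ((∫ s : ℝ, (s - K) * ((if K < s then (1:ℝ) else 0) - (if K < s₀ then 1 else 0)) * q s : ℝ) : ℂ)
      = ∫ K : ℝ, ∫ s : ℝ, Complex.exp (Complex.I * (v : ℂ) * (K : ℂ)) *
          (((s - K) * ((if K < s then (1:ℝ) else 0) - (if K < s₀ then 1 else 0)) * q s : ℝ) : ℂ) := by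
        refine integral_congr_ae (Filter.Eventually.of_forall fun K => ?_)
        beta_reduce
        rw [integral_const_mul]
        congr 1
        exact integral_ofReal.symm
    _ = ∫ s : ℝ, ∫ K : ℝ, Complex.exp (Complex.I * (v : ℂ) * (K : ℂ)) *
          (((s - K) * ((if K < s then (1:ℝ) else 0) - (if K < s₀ then 1 else 0)) * q s : ℝ) : ℂ) := hswap
    _ = ∫ s : ℝ, ((q s : ℝ) : ℂ) *
        ∫ K in s₀..s, Complex.exp (Complex.I * (v : ℂ) * (K : ℂ)) * ((s : ℂ) - (K : ℂ)) := by
        refine integral_congr_ae (Filter.Eventually.of_forall fun s => ?_)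
        beta_reduce
        have hpt : ∀ K : ℝ, Complex.exp (Complex.I * (v : ℂ) * (K : ℂ)) *
            (((s - K) * ((if K < s then (1:ℝ) else 0) - (if K < s₀ then 1 else 0)) * q s : ℝ) : ℂ)
            = (q s : ℂ) * (((((if K < s then (1:ℝ) else 0) - (if K < s₀ then 1 else 0)) : ℝ) : ℂ) * (Complex.exp (Complex.I * (v : ℂ) * (K : ℂ)) *
              ((s : ℂ) - (K : ℂ)))) := by
          intro K
          push_cast
          ring
        simp_rw [hpt]
        rw [integral_const_mul]
        congr 1
        exact key_int s₀ s _
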